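/- Let A be an associative algebra over a field of characteristic zero and define the n-bracket [X_1,...,X_n] = ∑_{σ∈S_n} sgn(σ) X_{σ(1)}⋯X_{σ(n)}. Then (1/((n−1)! n!)) ∑_{σ∈S_{2n−1}} sgn(σ) [[X_{σ(1)},...,X_{σ(n)}], X_{σ(n+1)},...,X_{σ(2n−1)}] equals 0 if n is even, and equals n·[X_1,...,X_{2n−1}] if n is odd. -/

import Mathlib

/-- The fully antisymmetrized `n`-bracket in an associative algebra. -/
def mbracket {A : Type*} [Ring A] {n : ℕ} (X : Fin n → A) : A :=
  ∑ σ : Equiv.Perm (Fin n), (Equiv.Perm.sign σ : ℤ) • (List.ofFn fun i => X (σ i)).prod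


namespace JacobiAux

open Equiv Equiv.Perm List

/-- Block-diagonal permutation of `Fin N` built from perms of `Fin a` and `Fin b`. -/
def pcongr {a b N : ℕ} (h : a + b = N) (p : Perm (Fin a)) (q : Perm (Fin b)) : Perm (Fin N) :=
  (finSumFinEquiv.trans (finCongr h)).permCongr (Equiv.sumCongr p q)

lemma fe_apply_inl {a b N : ℕ} (h : a + b = N) (i : Fin a) :
    (finSumFinEquiv.trans (finCongr h)) (Sum.inl i) = ⟨i.1, by omega⟩ := by
  apply Fin.ext
  simp [finCongr]

lemma fe_apply_inr {a b N : ℕ} (h : a + b = N) (i : Fin b) :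
    (finSumFinEquiv.trans (finCongr h)) (Sum.inr i) = ⟨a + i.1, by omega⟩ := by
  apply Fin.ext
  simp [finCongr]

lemma pcongr_apply_left {a b N : ℕ} (h : a + b = N) (p : Perm (Fin a)) (q : Perm (Fin b))
    (t : Fin N) (ht : (t : ℕ) < a) :
    pcongr h p q t = ⟨(p ⟨t, ht⟩ : Fin a).1, by omega⟩ := by
  have hsymm : (finSumFinEquiv.trans (finCongr h)).symm t = Sum.inl ⟨t, ht⟩ := by
    rw [Equiv.symm_apply_eq, fe_apply_inl]
  rw [pcongr, Equiv.permCongr_apply, hsymm]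
  simp only [Equiv.sumCongr_apply, Sum.map_inl]
  rw [fe_apply_inl]

lemma pcongr_apply_right {a b N : ℕ} (h : a + b = N) (p : Perm (Fin a)) (q : Perm (Fin b))
    (t : Fin N) (ht : a ≤ (t : ℕ)) :
    pcongr h p q t = ⟨a + (q ⟨t - a, by omega⟩ : Fin b).1, by omega⟩ := by
  have hsymm : (finSumFinEquiv.trans (finCongr h)).symm t = Sum.inr ⟨t - a, by omega⟩ := by
    rw [Equiv.symm_apply_eq, fe_apply_inr]
    apply Fin.ext
    simp only
    omega
  rw [pcongr, Equiv.permCongr_apply, hsymm]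
  simp only [Equiv.sumCongr_apply, Sum.map_inr]
  rw [fe_apply_inr]

lemma sign_pcongr {a b N : ℕ} (h : a + b = N) (p : Perm (Fin a)) (q : Perm (Fin b)) :
    sign (pcongr h p q) = sign p * sign q := by
  rw [pcongr, sign_permCongr, sign_sumCongr]

lemma coe_finRotate_pow (s r : ℕ) (i : Fin (s + 1)) :
    ((((finRotate (s + 1)) ^ r) i : Fin (s + 1)) : ℕ) = ((i : ℕ) + r) % (s + 1) := by
  induction r with
  | zero => simp [Nat.mod_eq_of_lt i.isLt]
  | succ n ih =>
    rw [pow_succ', Perm.mul_apply, finRotate_succ_apply, Fin.add_def, ih, Fin.val_one']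
    show ((↑i + n) % (s + 1) + 1 % (s + 1)) % (s + 1) = (↑i + (n + 1)) % (s + 1)
    rw [← Nat.add_mod, Nat.add_assoc]

end JacobiAux
section Layer2
namespace JacobiAux

open Equiv Equiv.Perm List

variable {A : Type*}

lemma flatten_ofFn_singleton : ∀ {n : ℕ} (f : Fin n → A),
    (ofFn fun i => [f i]).flatten = ofFn f := by
  intro n
  induction n with
  | zero => intro f; simp
  | succ n ih =>
    intro f
    rw [ofFn_succ, ofFn_succ (f := f), flatten_cons, ih]
    rfl

lemma ofFn_cast {a b : ℕ} (h : a = b) (f : Fin b → A) :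
    ofFn (fun i : Fin a => f (Fin.cast h i)) = ofFn f := by
  subst h; rfl

variable (m : ℕ)

def Ehead (ρ : Perm (Fin (m + 1))) : Perm (Fin (2 * m + 1)) :=
  pcongr (by omega : (m + 1) + m = 2 * m + 1) ρ 1

def Etail (h : Perm (Fin m)) : Perm (Fin (2 * m + 1)) :=
  pcongr (by omega : (m + 1) + m = 2 * m + 1) 1 h

def Efix0 (h : Perm (Fin m)) : Perm (Fin (m + 1)) :=
  pcongr (by omega : 1 + m = m + 1) 1 h

def gblock (k : Fin (m + 1)) : Perm (Fin (2 * m + 1)) :=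
  pcongr (by omega : ((k : ℕ) + m + 1) + (m - (k : ℕ)) = 2 * m + 1)
    ((finRotate ((k : ℕ) + m + 1)) ^ (m + 1)) 1

lemma Ehead_castLE (ρ : Perm (Fin (m + 1))) (j : Fin (m + 1)) :
    Ehead m ρ (Fin.castLE (by linarith) j) = Fin.castLE (by linarith) (ρ j) := by
  rw [Ehead, pcongr_apply_left _ _ _ _ (by simpa using j.isLt)]
  rfl

lemma Ehead_tail (ρ : Perm (Fin (m + 1))) (j : Fin m) :
    Ehead m ρ ⟨m + 1 + j.1, by omega⟩ = ⟨m + 1 + j.1, by omega⟩ := by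
  rw [Ehead, pcongr_apply_right _ _ _ _ (by simp)]
  apply Fin.ext
  simp

lemma Etail_castLE (h : Perm (Fin m)) (j : Fin (m + 1)) :
    Etail m h (Fin.castLE (by linarith) j) = Fin.castLE (by linarith) j := by
  rw [Etail, pcongr_apply_left _ _ _ _ (by simpa using j.isLt)]
  rfl

lemma Etail_tail (h : Perm (Fin m)) (j : Fin m) :
    Etail m h ⟨m + 1 + j.1, by omega⟩ = ⟨m + 1 + (h j).1, by omega⟩ := by
  rw [Etail, pcongr_apply_right _ _ _ _ (by simp)]
  apply Fin.ext
  simp only [Perm.one_apply]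
  congr 2
  apply Fin.ext
  simp

lemma Efix0_zero (h : Perm (Fin m)) : Efix0 m h 0 = 0 := by
  rw [Efix0, pcongr_apply_left _ _ _ _ (by simp)]
  rfl

lemma Efix0_succ (h : Perm (Fin m)) (j : Fin m) :
    Efix0 m h (Fin.succ j) = Fin.succ (h j) := by
  rw [Efix0, pcongr_apply_right _ _ _ _ (by simp)]
  have e : ∀ (pf : j.1 + 1 - 1 < m), (⟨j.1 + 1 - 1, pf⟩ : Fin m) = j :=
    fun pf => Fin.ext (by simp)
  apply Fin.ext
  simp only [Perm.one_apply, e, Fin.val_succ]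
  omega

lemma gblock_lt (k : Fin (m + 1)) (t : Fin (2 * m + 1)) (ht : (t : ℕ) < (k : ℕ) + m + 1) :
    gblock m k t = ⟨((t : ℕ) + (m + 1)) % ((k : ℕ) + m + 1), by
      have := Nat.mod_lt ((t : ℕ) + (m + 1)) (y := (k : ℕ) + m + 1) (by omega); omega⟩ := by
  rw [gblock, pcongr_apply_left _ _ _ _ ht]
  apply Fin.ext
  simp only
  rw [coe_finRotate_pow]

lemma gblock_ge (k : Fin (m + 1)) (t : Fin (2 * m + 1)) (ht : (k : ℕ) + m + 1 ≤ (t : ℕ)) :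
    gblock m k t = t := by
  rw [gblock, pcongr_apply_right _ _ _ _ ht]
  apply Fin.ext
  simp only [Perm.one_apply]
  omega

lemma gblock_first (k : Fin (m + 1)) (t : Fin (2 * m + 1)) (ht : (t : ℕ) < (k : ℕ)) :
    gblock m k t = ⟨m + 1 + (t : ℕ), by omega⟩ := by
  rw [gblock_lt m k t (by omega)]
  apply Fin.ext
  simp only
  rw [Nat.mod_eq_of_lt (by omega)]
  omega

lemma gblock_block (k : Fin (m + 1)) (j : Fin (m + 1)) :
    gblock m k ⟨(k : ℕ) + j.1, by omega⟩ = Fin.castLE (by linarith) j := by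
  rw [gblock_lt m k _ (by show (k:ℕ) + j.1 < _; have := j.isLt; omega)]
  apply Fin.ext
  simp only [Fin.castLE]
  have : (k : ℕ) + j.1 + (m + 1) = ((k : ℕ) + m + 1) + j.1 := by omega
  rw [this, Nat.add_mod_left, Nat.mod_eq_of_lt (by omega)]

lemma sign_gblock (k : Fin (m + 1)) :
    sign (gblock m k) = ((-1) ^ ((k : ℕ) + m)) ^ (m + 1) := by
  rw [gblock, sign_pcongr, map_pow, sign_finRotate]
  simp

end JacobiAux
end Layer2
section Layer3
namespace JacobiAux
open Equiv Equiv.Perm List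

variable {A : Type*} (m : ℕ)

def Wl (X : Fin (2 * m + 1) → A) (σ : Perm (Fin (2 * m + 1))) : Fin (m + 1) → List A :=
  Fin.cons (ofFn fun j : Fin (m + 1) => X (σ (Fin.castLE (by linarith) j)))
    (fun j : Fin m => [X (σ ⟨m + 1 + j.1, by omega⟩)])

lemma key_flatten (X : Fin (2 * m + 1) → A) (σ : Perm (Fin (2 * m + 1))) (k : Fin (m + 1)) :
    (ofFn fun i => Wl m X σ (Fin.cycleRange k i)).flatten
      = ofFn fun t => X (σ (gblock m k t)) := by
  have hK := k.isLt
  set K := (k : ℕ) with hKdef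
  have h1 : K + (1 + (m - K)) = m + 1 := by omega
  have h2 : K + ((m + 1) + (m - K)) = 2 * m + 1 := by omega
  trans ((ofFn fun i : Fin K => X (σ ⟨m + 1 + i.1, by omega⟩)) ++
      ((ofFn fun j : Fin (m + 1) => X (σ (Fin.castLE (by linarith) j))) ++
       (ofFn fun i : Fin (m - K) => X (σ ⟨m + 1 + K + i.1, by omega⟩))))
  · -- LHS : flatten side
    have p1 : (ofFn fun i : Fin K =>
        Wl m X σ (Fin.cycleRange k (Fin.cast h1 (Fin.castAdd (1 + (m - K)) i)))).flatten
        = ofFn fun i : Fin K => X (σ ⟨m + 1 + i.1, by omega⟩) := by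
      rw [← flatten_ofFn_singleton (fun i : Fin K => X (σ ⟨m + 1 + i.1, by omega⟩))]
      refine congrArg _ (congrArg List.ofFn (funext fun i => ?_))
      have hi := i.isLt
      have hlt : (Fin.cast h1 (Fin.castAdd (1 + (m - K)) i)) < k := by
        rw [Fin.lt_def]
        simp only [Fin.coe_cast, Fin.coe_castAdd]
        omega
      rw [Fin.cycleRange_of_lt hlt]
      have ha : Fin.cast h1 (Fin.castAdd (1 + (m - K)) i) + 1 = Fin.succ ⟨i.1, by omega⟩ := by
        apply Fin.ext
        rw [Fin.val_add_one_of_lt (by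
          rw [Fin.lt_def]
          simp only [Fin.coe_cast, Fin.coe_castAdd, Fin.val_last]
          omega)]
        simp
      rw [ha, Wl, Fin.cons_succ]
    have p2 : (ofFn fun i : Fin 1 =>
        Wl m X σ (Fin.cycleRange k
          (Fin.cast h1 (Fin.natAdd K (Fin.castAdd (m - K) i))))).flatten
        = ofFn fun j : Fin (m + 1) => X (σ (Fin.castLE (by linarith) j)) := by
      have h0 : (Fin.cast h1 (Fin.natAdd K (Fin.castAdd (m - K) (0 : Fin 1)))) = k :=
        Fin.ext (by simp [hKdef])
      simp only [List.ofFn_succ, List.ofFn_zero]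
      rw [h0, Fin.cycleRange_self]
      simp [Wl]
    have p3 : (ofFn fun i : Fin (m - K) =>
        Wl m X σ (Fin.cycleRange k
          (Fin.cast h1 (Fin.natAdd K (Fin.natAdd 1 i))))).flatten
        = ofFn fun i : Fin (m - K) => X (σ ⟨m + 1 + K + i.1, by omega⟩) := by
      rw [← flatten_ofFn_singleton (fun i : Fin (m - K) => X (σ ⟨m + 1 + K + i.1, by omega⟩))]
      refine congrArg _ (congrArg List.ofFn (funext fun i => ?_))
      have hi := i.isLt
      have hgt : k < (Fin.cast h1 (Fin.natAdd K (Fin.natAdd 1 i))) := by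
        rw [Fin.lt_def]
        simp only [Fin.coe_cast, Fin.coe_natAdd]
        omega
      rw [Fin.cycleRange_of_gt hgt]
      have ha : Fin.cast h1 (Fin.natAdd K (Fin.natAdd 1 i)) = Fin.succ ⟨K + i.1, by omega⟩ := by
        apply Fin.ext
        simp only [Fin.coe_cast, Fin.coe_natAdd, Fin.val_succ]
        omega
      rw [ha, Wl, Fin.cons_succ]
      exact congrArg (fun t => [X (σ t)])
        (Fin.ext (show m + 1 + (K + i.1) = m + 1 + K + i.1 by omega))
    conv_lhs => rw [← ofFn_cast h1 (fun i => Wl m X σ (Fin.cycleRange k i)),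
      List.ofFn_add, List.ofFn_add]
    rw [flatten_append, flatten_append]
    exact congrArg₂ (· ++ ·) p1 (congrArg₂ (· ++ ·) p2 p3)
  · -- RHS : gblock side
    have q1 : (ofFn fun i : Fin K =>
        X (σ (gblock m k (Fin.cast h2 (Fin.castAdd ((m + 1) + (m - K)) i)))))
        = ofFn fun i : Fin K => X (σ ⟨m + 1 + i.1, by omega⟩) := by
      refine congrArg List.ofFn (funext fun i => ?_)
      rw [gblock_first m k _ (by have := i.isLt; simp only [Fin.coe_cast, Fin.coe_castAdd]; omega)]
      exact congrArg (fun t => X (σ t))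
        (Fin.ext (show m + 1 + ((Fin.cast h2 (Fin.castAdd ((m + 1) + (m - K)) i)) : ℕ)
          = m + 1 + i.1 by simp))
    have q2 : (ofFn fun j : Fin (m + 1) =>
        X (σ (gblock m k (Fin.cast h2 (Fin.natAdd K (Fin.castAdd (m - K) j))))))
        = ofFn fun j : Fin (m + 1) => X (σ (Fin.castLE (by linarith) j)) := by
      refine congrArg List.ofFn (funext fun j => ?_)
      have ht : (Fin.cast h2 (Fin.natAdd K (Fin.castAdd (m - K) j))) = ⟨K + j.1, by omega⟩ :=
        Fin.ext (by simp)
      rw [ht, gblock_block]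
    have q3 : (ofFn fun i : Fin (m - K) =>
        X (σ (gblock m k (Fin.cast h2 (Fin.natAdd K (Fin.natAdd (m + 1) i))))))
        = ofFn fun i : Fin (m - K) => X (σ ⟨m + 1 + K + i.1, by omega⟩) := by
      refine congrArg List.ofFn (funext fun i => ?_)
      have hi := i.isLt
      rw [gblock_ge m k _ (by
        simp only [Fin.coe_cast, Fin.coe_natAdd]
        omega)]
      exact congrArg (fun t => X (σ t))
        (Fin.ext (show ((Fin.cast h2 (Fin.natAdd K (Fin.natAdd (m + 1) i))) : ℕ)
          = m + 1 + K + i.1 by simp; omega))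
    conv_rhs => rw [← ofFn_cast h2 (fun t => X (σ (gblock m k t))),
      List.ofFn_add, List.ofFn_add]
    exact (congrArg₂ (· ++ ·) q1 (congrArg₂ (· ++ ·) q2 q3)).symm

end JacobiAux
end Layer3
section Layer4
namespace JacobiAux
open Equiv Equiv.Perm List

variable {A : Type*} [Ring A]

lemma sum_smul_comp {N : ℕ} (g : Perm (Fin N)) (F : Perm (Fin N) → A) :
    ∑ σ : Perm (Fin N), (sign σ : ℤ) • F (σ * g) =
      ((sign g : ℤˣ) : ℤ) • ∑ σ : Perm (Fin N), (sign σ : ℤ) • F σ := by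
  rw [Finset.smul_sum]
  refine Fintype.sum_equiv (Equiv.mulRight g) _ _ fun σ => ?_
  simp only [Equiv.coe_mulRight, smul_smul]
  congr 1
  have : ((sign g : ℤˣ) : ℤ) * ((sign (σ * g) : ℤˣ) : ℤ)
      = ((sign g * (sign σ * sign g) : ℤˣ) : ℤ) := by
    rw [map_mul]; push_cast; ring
  rw [this]
  have : sign g * (sign σ * sign g) = sign σ := by
    rw [mul_comm (sign σ) (sign g), ← mul_assoc, Int.units_mul_self, one_mul]
  rw [this]

variable (m : ℕ)

lemma decomp_bijective :
    Function.Bijective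
      (fun kh : Fin (m + 1) × Perm (Fin m) => Efix0 m kh.2 * Fin.cycleRange kh.1) := by
  rw [Fintype.bijective_iff_injective_and_card]
  constructor
  · rintro ⟨k, h⟩ ⟨k', h'⟩ heq
    simp only at heq
    have hzero : ∀ (k : Fin (m + 1)) (h : Perm (Fin m)),
        (Efix0 m h * Fin.cycleRange k) k = 0 := fun k h => by
      rw [Perm.mul_apply, Fin.cycleRange_self, Efix0_zero]
    have hk : k = k' := by
      have h1 := hzero k h
      rw [heq] at h1
      have h2 := hzero k' h'
      exact (Efix0 m h' * Fin.cycleRange k').injective (h1.trans h2.symm)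
    subst hk
    have hE : Efix0 m h = Efix0 m h' := mul_right_cancel heq
    have hh : h = h' := by
      apply Equiv.ext
      intro j
      have := congrArg (fun p : Perm (Fin (m + 1)) => p (Fin.succ j)) hE
      simp only [Efix0_succ] at this
      exact Fin.succ_injective m this
    rw [hh]
  · simp [Fintype.card_perm, Nat.factorial_succ]

end JacobiAux
end Layer4
section Layer5
namespace JacobiAux
open Equiv Equiv.Perm List

variable {A : Type*} [Ring A]

lemma cons_comp_eq_update {n : ℕ} (B : A) (Y : Fin n → A) (τ : Perm (Fin (n + 1))) :
    (fun i => (Fin.cons B Y : Fin (n + 1) → A) (τ i))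
      = Function.update (fun i => (Fin.cons 0 Y : Fin (n + 1) → A) (τ i)) (τ⁻¹ 0) B := by
  funext i
  rcases eq_or_ne i (τ⁻¹ 0) with rfl | hne
  · rw [Function.update_self, Perm.coe_inv, Equiv.apply_symm_apply, Fin.cons_zero]
  · rw [Function.update_of_ne hne]
    have hτ : τ i ≠ 0 := by
      intro h
      exact hne (by rw [← h, Perm.coe_inv, Equiv.symm_apply_apply])
    obtain ⟨j, hj⟩ := Fin.exists_succ_eq_of_ne_zero hτ
    rw [← hj, Fin.cons_succ, Fin.cons_succ]

lemma mbracket_eq_multilinear {n : ℕ} (v : Fin n → A) :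
    mbracket v = ∑ τ : Perm (Fin n), (sign τ : ℤ) •
      (MultilinearMap.mkPiAlgebraFin ℤ n A) (fun i => v (τ i)) := by
  simp [mbracket, MultilinearMap.mkPiAlgebraFin_apply]

lemma mbracket_cons_sum {n : ℕ} {ι : Type*} [Fintype ι] (Y : Fin n → A)
    (c : ι → ℤ) (b : ι → A) :
    mbracket (Fin.cons (∑ ρ : ι, c ρ • b ρ) Y)
      = ∑ ρ : ι, c ρ • mbracket (Fin.cons (b ρ) Y) := by
  have key : ∀ τ : Perm (Fin (n + 1)),
      (MultilinearMap.mkPiAlgebraFin ℤ (n + 1) A)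
          (fun i => (Fin.cons (∑ ρ : ι, c ρ • b ρ) Y : Fin (n + 1) → A) (τ i))
        = ∑ ρ : ι, c ρ • (MultilinearMap.mkPiAlgebraFin ℤ (n + 1) A)
            (fun i => (Fin.cons (b ρ) Y : Fin (n + 1) → A) (τ i)) := by
    intro τ
    set L := MultilinearMap.toLinearMap (MultilinearMap.mkPiAlgebraFin ℤ (n + 1) A)
      (fun i => (Fin.cons (0 : A) Y : Fin (n + 1) → A) (τ i)) (τ⁻¹ 0) with hL
    have hLa : ∀ B : A, (MultilinearMap.mkPiAlgebraFin ℤ (n + 1) A)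
        (fun i => (Fin.cons B Y : Fin (n + 1) → A) (τ i)) = L B := fun B => by
      rw [cons_comp_eq_update]
      simp [hL]
    rw [hLa, map_sum]
    refine Finset.sum_congr rfl fun ρ _ => ?_
    rw [map_smul, hLa]
  rw [mbracket_eq_multilinear]
  simp_rw [key, Finset.smul_sum]
  rw [Finset.sum_comm]
  conv_rhs =>
    enter [2, ρ]
    rw [mbracket_eq_multilinear, Finset.smul_sum]
  simp_rw [smul_smul, mul_comm]

end JacobiAux
end Layer5
section Layer6
namespace JacobiAux
open Equiv Equiv.Perm List

variable {A : Type*} [Ring A]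

lemma sum_smul_comp' {N : ℕ} (g : Perm (Fin N)) (w : ℤˣ) (hw : sign g = w)
    (F : Perm (Fin N) → A) :
    ∑ σ : Perm (Fin N), (sign σ : ℤ) • ((w : ℤ) • F (σ * g)) =
      ∑ σ : Perm (Fin N), (sign σ : ℤ) • F σ := by
  simp_rw [smul_comm _ ((w : ℤ))]
  rw [← Finset.smul_sum, sum_smul_comp, hw, smul_smul, Int.units_coe_mul_self, one_smul]

variable (m : ℕ) (X : Fin (2 * m + 1) → A)

/-- The "head-expanded" summand. -/
def Fq (μ : Perm (Fin (2 * m + 1))) : A :=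
  mbracket (Fin.cons ((ofFn fun i : Fin (m + 1) => X (μ (Fin.castLE (by linarith) i))).prod)
    (fun j : Fin m => X (μ ⟨m + 1 + j.1, by omega⟩)))

def Pl (τ : Perm (Fin (m + 1))) (σ : Perm (Fin (2 * m + 1))) : A :=
  ((ofFn fun i => Wl m X σ (τ i)).flatten).prod

lemma sign_Ehead (ρ : Perm (Fin (m + 1))) : sign (Ehead m ρ) = sign ρ := by
  rw [Ehead, sign_pcongr]; simp

lemma sign_Etail (h : Perm (Fin m)) : sign (Etail m h) = sign h := by
  rw [Etail, sign_pcongr]; simp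

lemma sign_Efix0 (h : Perm (Fin m)) : sign (Efix0 m h) = sign h := by
  rw [Efix0, sign_pcongr]; simp

lemma lemC (σ : Perm (Fin (2 * m + 1))) (ρ : Perm (Fin (m + 1))) :
    mbracket (Fin.cons ((ofFn fun i => X (σ (Fin.castLE (by linarith) (ρ i)))).prod)
        (fun j : Fin m => X (σ ⟨m + 1 + j.1, by omega⟩)))
      = Fq m X (σ * Ehead m ρ) := by
  rw [Fq]
  refine congrArg mbracket (funext fun i => ?_)
  induction i using Fin.cases with
  | zero =>
    rw [Fin.cons_zero, Fin.cons_zero]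
    refine congrArg List.prod (congrArg List.ofFn (funext fun i => ?_))
    rw [Perm.mul_apply, Ehead_castLE]
  | succ j =>
    rw [Fin.cons_succ, Fin.cons_succ]
    rw [Perm.mul_apply, Ehead_tail]

lemma lemW (σ : Perm (Fin (2 * m + 1))) (h : Perm (Fin m)) (j : Fin (m + 1)) :
    Wl m X σ (Efix0 m h j) = Wl m X (σ * Etail m h) j := by
  induction j using Fin.cases with
  | zero =>
    rw [Efix0_zero, Wl, Wl, Fin.cons_zero, Fin.cons_zero]
    refine congrArg List.ofFn (funext fun i => ?_)
    rw [Perm.mul_apply, Etail_castLE]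
  | succ j =>
    rw [Efix0_succ, Wl, Wl, Fin.cons_succ, Fin.cons_succ, Perm.mul_apply, Etail_tail]

lemma lemPl (σ : Perm (Fin (2 * m + 1))) (k : Fin (m + 1)) (h : Perm (Fin m)) :
    Pl m X (Efix0 m h * Fin.cycleRange k) σ = Pl m X (Fin.cycleRange k) (σ * Etail m h) := by
  rw [Pl, Pl]
  refine congrArg _ (congrArg _ (congrArg List.ofFn (funext fun i => ?_)))
  rw [Perm.mul_apply, lemW]

lemma lemF (σ : Perm (Fin (2 * m + 1))) :
    Fq m X σ = ∑ τ : Perm (Fin (m + 1)), (sign τ : ℤ) • Pl m X τ σ := by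
  have hWp : (Fin.cons ((ofFn fun i : Fin (m + 1) => X (σ (Fin.castLE (by linarith) i))).prod)
      (fun j : Fin m => X (σ ⟨m + 1 + j.1, by omega⟩)) : Fin (m + 1) → A)
      = fun i => (Wl m X σ i).prod := by
    refine funext fun i => ?_
    induction i using Fin.cases with
    | zero => rw [Fin.cons_zero, Wl, Fin.cons_zero]
    | succ j => rw [Fin.cons_succ, Wl, Fin.cons_succ, List.prod_singleton]
  rw [Fq, hWp]
  simp only [mbracket]
  refine Finset.sum_congr rfl fun τ _ => congrArg _ ?_
  rw [Pl, List.prod_flatten, List.map_ofFn]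
  rfl

lemma lemU (k : Fin (m + 1)) :
    ∑ σ : Perm (Fin (2 * m + 1)), (sign σ : ℤ) • Pl m X (Fin.cycleRange k) σ
      = ((sign (gblock m k) : ℤˣ) : ℤ) • mbracket X := by
  have h1 : ∀ σ : Perm (Fin (2 * m + 1)), Pl m X (Fin.cycleRange k) σ
      = (ofFn fun t => X ((σ * gblock m k) t)).prod := by
    intro σ
    rw [Pl, key_flatten]
    refine congrArg List.prod (congrArg List.ofFn (funext fun t => ?_))
    rw [Perm.mul_apply]
  simp_rw [h1]
  rw [sum_smul_comp (gblock m k) (fun σ => (ofFn fun t => X (σ t)).prod)]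
  rfl

lemma lemT :
    ∑ σ : Perm (Fin (2 * m + 1)), (sign σ : ℤ) • Fq m X σ
      = ((m.factorial : ℤ) *
          ∑ k : Fin (m + 1), (-1 : ℤ) ^ (k : ℕ) * ((-1 : ℤ) ^ ((k : ℕ) + m)) ^ (m + 1)) •
        mbracket X := by
  calc ∑ σ : Perm (Fin (2 * m + 1)), (sign σ : ℤ) • Fq m X σ
      = ∑ σ : Perm (Fin (2 * m + 1)), ∑ τ : Perm (Fin (m + 1)),
          (sign σ : ℤ) • ((sign τ : ℤ) • Pl m X τ σ) := by
        simp_rw [lemF, Finset.smul_sum]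
    _ = ∑ τ : Perm (Fin (m + 1)), ∑ σ : Perm (Fin (2 * m + 1)),
          (sign σ : ℤ) • ((sign τ : ℤ) • Pl m X τ σ) := Finset.sum_comm
    _ = ∑ kh : Fin (m + 1) × Perm (Fin m), ∑ σ : Perm (Fin (2 * m + 1)),
          (sign σ : ℤ) • ((sign (Efix0 m kh.2 * Fin.cycleRange kh.1) : ℤ) •
            Pl m X (Efix0 m kh.2 * Fin.cycleRange kh.1) σ) :=
        (Fintype.sum_bijective _ (decomp_bijective m) _ _ fun kh => rfl).symm
    _ = ∑ kh : Fin (m + 1) × Perm (Fin m),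
          ((-1 : ℤ) ^ ((kh.1 : ℕ)) * ((-1 : ℤ) ^ ((kh.1 : ℕ) + m)) ^ (m + 1)) • mbracket X := by
        refine Finset.sum_congr rfl fun kh _ => ?_
        obtain ⟨k, h⟩ := kh
        have hsgn : ((sign (Efix0 m h * Fin.cycleRange k) : ℤˣ) : ℤ)
            = (sign h : ℤ) * (-1 : ℤ) ^ (k : ℕ) := by
          rw [map_mul, sign_Efix0, Fin.sign_cycleRange, Units.val_mul]
          push_cast
          ring
        have step1 : ∀ σ : Perm (Fin (2 * m + 1)),
            (sign σ : ℤ) • ((sign (Efix0 m h * Fin.cycleRange k) : ℤ) •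
              Pl m X (Efix0 m h * Fin.cycleRange k) σ)
            = (sign σ : ℤ) • (((sign h : ℤˣ) : ℤ) •
                ((-1 : ℤ) ^ (k : ℕ) • Pl m X (Fin.cycleRange k) (σ * Etail m h))) := by
          intro σ
          rw [lemPl, hsgn, mul_smul]
        simp only [step1]
        rw [sum_smul_comp' (Etail m h) (sign h) (sign_Etail m h)
          (fun σ => (-1 : ℤ) ^ (k : ℕ) • Pl m X (Fin.cycleRange k) σ)]
        simp_rw [smul_comm _ ((-1 : ℤ) ^ (k : ℕ))]
        rw [← Finset.smul_sum, lemU, smul_smul]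
        congr 1
        rw [sign_gblock]
        push_cast
        ring
    _ = ∑ k : Fin (m + 1), ∑ _h : Perm (Fin m),
          ((-1 : ℤ) ^ ((k : ℕ)) * ((-1 : ℤ) ^ ((k : ℕ) + m)) ^ (m + 1)) • mbracket X := by
        rw [Fintype.sum_prod_type]
    _ = ((m.factorial : ℤ) *
          ∑ k : Fin (m + 1), (-1 : ℤ) ^ (k : ℕ) * ((-1 : ℤ) ^ ((k : ℕ) + m)) ^ (m + 1)) •
        mbracket X := by
        simp_rw [Finset.sum_const, Finset.card_univ, Fintype.card_perm, Fintype.card_fin,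
          ← natCast_zsmul, smul_smul, ← Finset.sum_smul, Finset.mul_sum]

end JacobiAux
end Layer6
section Layer7
namespace JacobiAux
open Equiv Equiv.Perm List

variable {A : Type*} [Ring A] (m : ℕ) (X : Fin (2 * m + 1) → A)

lemma lemS :
    ∑ σ : Perm (Fin (2 * m + 1)), (sign σ : ℤ) •
        mbracket (Fin.cons
          (mbracket fun j : Fin (m + 1) => X (σ (Fin.castLE (by linarith) j)))
          (fun j : Fin m => X (σ ⟨m + 1 + j.1, by omega⟩)))
      = ((m + 1).factorial : ℕ) •
          ∑ σ : Perm (Fin (2 * m + 1)), (sign σ : ℤ) • Fq m X σ := by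
  calc ∑ σ : Perm (Fin (2 * m + 1)), (sign σ : ℤ) •
        mbracket (Fin.cons
          (mbracket fun j : Fin (m + 1) => X (σ (Fin.castLE (by linarith) j)))
          (fun j : Fin m => X (σ ⟨m + 1 + j.1, by omega⟩)))
      = ∑ σ : Perm (Fin (2 * m + 1)), (sign σ : ℤ) •
          ∑ ρ : Perm (Fin (m + 1)), (sign ρ : ℤ) • Fq m X (σ * Ehead m ρ) := by
        refine Finset.sum_congr rfl fun σ _ => congrArg _ ?_
        have hrfl : (mbracket fun j : Fin (m + 1) => X (σ (Fin.castLE (by linarith) j)))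
            = ∑ ρ : Perm (Fin (m + 1)), (sign ρ : ℤ) •
                (ofFn fun i => X (σ (Fin.castLE (by linarith) (ρ i)))).prod := rfl
        rw [hrfl, mbracket_cons_sum]
        exact Finset.sum_congr rfl fun ρ _ => congrArg _ (lemC m X σ ρ)
    _ = ∑ ρ : Perm (Fin (m + 1)), ∑ σ : Perm (Fin (2 * m + 1)),
          (sign σ : ℤ) • ((sign ρ : ℤ) • Fq m X (σ * Ehead m ρ)) := by
        simp_rw [Finset.smul_sum]
        rw [Finset.sum_comm]
    _ = ∑ _ρ : Perm (Fin (m + 1)), ∑ σ : Perm (Fin (2 * m + 1)),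
          (sign σ : ℤ) • Fq m X σ := by
        refine Finset.sum_congr rfl fun ρ _ => ?_
        rw [sum_smul_comp' (Ehead m ρ) (sign ρ) (sign_Ehead m ρ) (Fq m X)]
    _ = ((m + 1).factorial : ℕ) •
          ∑ σ : Perm (Fin (2 * m + 1)), (sign σ : ℤ) • Fq m X σ := by
        rw [Finset.sum_const, Finset.card_univ, Fintype.card_perm, Fintype.card_fin]

end JacobiAux
end Layer7


/-- with n = m+1: the weighted antisymmetrized double bracket equals 0
for n even and n·[X_1,...,X_{2n-1}] for n odd. -/
theorem mbracket_generalized_jacobi_sum {A : Type*} [Ring A] [Algebra ℚ A]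
    (m : ℕ) (X : Fin (2 * m + 1) → A) :
    ((1 : ℚ) / ((m.factorial : ℚ) * ((m + 1).factorial : ℚ))) •
        ∑ σ : Equiv.Perm (Fin (2 * m + 1)), (Equiv.Perm.sign σ : ℤ) •
          mbracket (Fin.cons
            (mbracket fun j : Fin (m + 1) => X (σ (Fin.castLE (by omega) j)))
            (fun j : Fin m => X (σ ⟨m + 1 + j.1, by have := j.isLt; omega⟩)))
      = if Even (m + 1) then 0 else ((m + 1 : ℕ) : ℚ) • mbracket X := by
  rw [JacobiAux.lemS, JacobiAux.lemT]
  rw [← Nat.cast_smul_eq_nsmul ℚ, ← Int.cast_smul_eq_zsmul ℚ, smul_smul, smul_smul]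
  set c : ℤ := ∑ k : Fin (m + 1), (-1 : ℤ) ^ (k : ℕ) * ((-1 : ℤ) ^ ((k : ℕ) + m)) ^ (m + 1)
    with hc
  have hfac1 : ((m.factorial : ℚ)) ≠ 0 := Nat.cast_ne_zero.mpr (Nat.factorial_ne_zero m)
  have hfac2 : (((m + 1).factorial : ℚ)) ≠ 0 := Nat.cast_ne_zero.mpr (Nat.factorial_ne_zero _)
  have hscal : (1 : ℚ) / ((m.factorial : ℚ) * ((m + 1).factorial : ℚ)) *
      (((m + 1).factorial : ℕ) : ℚ) * (((m.factorial : ℤ) * c : ℤ) : ℚ) = (c : ℚ) := by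
    push_cast
    field_simp
  rw [hscal]
  rcases Nat.even_or_odd m with hm | hm
  · -- m even : n = m+1 odd, result (m+1) • mbracket X
    have hno : ¬ Even (m + 1) := by
      rw [Nat.even_add_one]
      exact fun h => h hm
    rw [if_neg hno]
    have hterm : ∀ k : Fin (m + 1),
        (-1 : ℤ) ^ (k : ℕ) * ((-1 : ℤ) ^ ((k : ℕ) + m)) ^ (m + 1) = 1 := by
      intro k
      obtain ⟨t, rfl⟩ := hm
      rw [← pow_mul, ← pow_add]
      exact Even.neg_one_pow ⟨(k : ℕ) + t + t * ((k : ℕ) + (t + t)), by ring⟩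
    have hcval : c = ((m + 1 : ℕ) : ℤ) := by
      rw [hc, Finset.sum_congr rfl fun k _ => hterm k, Finset.sum_const, Finset.card_univ,
        Fintype.card_fin, nsmul_eq_mul, mul_one]
    rw [hcval]
    push_cast
    ring_nf
  · -- m odd : n = m+1 even, result 0
    have hyes : Even (m + 1) := by
      rw [Nat.even_add_one]
      simp [Nat.not_even_iff_odd.mpr hm]
    rw [if_pos hyes]
    have hterm : ∀ k : Fin (m + 1),
        (-1 : ℤ) ^ (k : ℕ) * ((-1 : ℤ) ^ ((k : ℕ) + m)) ^ (m + 1) = (-1 : ℤ) ^ (k : ℕ) := by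
      intro k
      obtain ⟨t, rfl⟩ := hm
      have he : Even (((k : ℕ) + (2 * t + 1)) * (2 * t + 1 + 1)) :=
        ⟨((k : ℕ) + (2 * t + 1)) * (t + 1), by ring⟩
      rw [← pow_mul, he.neg_one_pow, mul_one]
    have hcval : c = 0 := by
      rw [hc, Finset.sum_congr rfl fun k _ => hterm k,
        Fin.sum_univ_eq_sum_range (fun i => (-1 : ℤ) ^ i) (m + 1), neg_one_geom_sum,
        if_pos hyes]
    rw [hcval]
    simp
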